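/- Hadamard lemma at a point of a manifold via a global chart: let M be a smooth m-dimensional manifold without boundary, s₀ ∈ M, and let U₀ ⊆ M be an open neighborhood of s₀ for which there is a diffeomorphism ω : U₀ → ℝ^m (a smooth bijection with smooth inverse, with U₀ carrying its induced manifold structure) satisfying ω(s₀) = 0. Then for every smooth function f : U₀ → ℝ with f(s₀) = 0 there exist smooth functions f₁, …, f_m : U₀ → ℝ such that f(t) = Σ_{i=1}^{m} ω(t)_i · f_i(t) for all t ∈ U₀, where ω(t)_i denotes the i-th coordinate of ω(t). -/

import Mathlib

open TopologicalSpace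
open scoped Manifold BigOperators

open MeasureTheory intervalIntegral Metric
set_option synthInstance.maxHeartbeats 400000
set_option maxHeartbeats 1000000

lemma aux_key_deriv {m : ℕ} {E : Type} [NormedAddCommGroup E] [NormedSpace ℝ E]
    (Φ : EuclideanSpace ℝ (Fin m) → E) (hΦ : ContDiff ℝ ((⊤ : ℕ∞) : WithTop ℕ∞) Φ) (k : ℕ)
    (t : ℝ) (x : EuclideanSpace ℝ (Fin m)) :
      HasFDerivAt (fun x => t ^ k • Φ (t • x)) (t ^ (k+1) • fderiv ℝ Φ (t • x)) x := by
  have h1 : HasFDerivAt (fun x : EuclideanSpace ℝ (Fin m) => t • x)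
      (t • ContinuousLinearMap.id ℝ (EuclideanSpace ℝ (Fin m))) x :=
    (ContinuousLinearMap.id ℝ _).hasFDerivAt.const_smul t
  have h2 := ((hΦ.differentiable (by simp) (t • x)).hasFDerivAt.comp x h1).const_smul
      (t ^ k)
  have heq : (t ^ k) • ((fderiv ℝ Φ (t • x)).comp
      (t • ContinuousLinearMap.id ℝ (EuclideanSpace ℝ (Fin m))))
      = t ^ (k+1) • fderiv ℝ Φ (t • x) := by
    ext v
    simp only [ContinuousLinearMap.smul_apply, ContinuousLinearMap.coe_comp',
      Function.comp_apply, ContinuousLinearMap.coe_id', id_eq, _root_.map_smul, smul_smul,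
      pow_succ]
  rw [heq] at h2
  exact h2

lemma aux_hasFDerivAt {m : ℕ} {E : Type} [NormedAddCommGroup E] [NormedSpace ℝ E]
    [CompleteSpace E]
    (Φ : EuclideanSpace ℝ (Fin m) → E) (hΦ : ContDiff ℝ ((⊤ : ℕ∞) : WithTop ℕ∞) Φ) (k : ℕ)
    (x₀ : EuclideanSpace ℝ (Fin m)) :
    HasFDerivAt (fun x : EuclideanSpace ℝ (Fin m) => ∫ t in (0:ℝ)..1, t ^ k • Φ (t • x))
      (∫ t in (0:ℝ)..1, t ^ (k+1) • fderiv ℝ Φ (t • x₀)) x₀ := by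
  have hΦ' : ContDiff ℝ ((⊤ : ℕ∞) : WithTop ℕ∞) (fderiv ℝ Φ) := (contDiff_infty_iff_fderiv.mp hΦ).2
  obtain ⟨C, hC⟩ := (isCompact_closedBall (0 : EuclideanSpace ℝ (Fin m))
      (‖x₀‖ + 1)).exists_bound_of_continuousOn hΦ'.continuous.norm.continuousOn
  have hC' : ∀ y ∈ closedBall (0 : EuclideanSpace ℝ (Fin m)) (‖x₀‖ + 1),
      ‖fderiv ℝ Φ y‖ ≤ C := fun y hy => by
    simpa [Real.norm_eq_abs, abs_of_nonneg (norm_nonneg _)] using hC y hy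
  apply intervalIntegral.hasFDerivAt_integral_of_dominated_of_fderiv_le (𝕜 := ℝ) (μ := volume)
    (F' := fun (x : EuclideanSpace ℝ (Fin m)) (t : ℝ) => t ^ (k+1) • fderiv ℝ Φ (t • x))
    (bound := fun _ => C) (s := ball x₀ 1) (ball_mem_nhds x₀ one_pos)
  · filter_upwards with x
    exact Continuous.aestronglyMeasurable
      ((continuous_pow k).smul (hΦ.continuous.comp (continuous_id.smul continuous_const)))
  · exact Continuous.intervalIntegrable
      ((continuous_pow k).smul (hΦ.continuous.comp (continuous_id.smul continuous_const))) _ _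
  · exact Continuous.aestronglyMeasurable
      ((continuous_pow (k+1)).smul (hΦ'.continuous.comp (continuous_id.smul continuous_const)))
  · filter_upwards with t ht x hx
    rw [Set.uIoc_of_le (by norm_num : (0:ℝ) ≤ 1)] at ht
    have ht0 : 0 ≤ t := le_of_lt ht.1
    have ht1 : t ≤ 1 := ht.2
    have hmem : t • x ∈ closedBall (0 : EuclideanSpace ℝ (Fin m)) (‖x₀‖ + 1) := by
      rw [mem_closedBall, dist_zero_right, norm_smul]
      have hxn : ‖x‖ ≤ ‖x₀‖ + 1 := by
        have h := mem_ball_iff_norm.mp hx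
        calc ‖x‖ = ‖x₀ + (x - x₀)‖ := by rw [add_sub_cancel]
          _ ≤ ‖x₀‖ + ‖x - x₀‖ := norm_add_le _ _
          _ ≤ ‖x₀‖ + 1 := by linarith
      calc ‖t‖ * ‖x‖ ≤ 1 * (‖x₀‖ + 1) := by
            apply mul_le_mul (by rwa [Real.norm_eq_abs, abs_of_nonneg ht0]) hxn (norm_nonneg _)
            positivity
        _ = ‖x₀‖ + 1 := one_mul _
    have h1 : ‖t ^ (k+1)‖ ≤ 1 := by
      rw [Real.norm_eq_abs, abs_pow]
      exact pow_le_one₀ (abs_nonneg t) (by rw [abs_of_nonneg ht0]; exact ht1)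
    calc ‖t ^ (k+1) • fderiv ℝ Φ (t • x)‖ ≤ ‖t ^ (k+1)‖ * ‖fderiv ℝ Φ (t • x)‖ :=
          ContinuousLinearMap.opNorm_smul_le _ _
      _ ≤ 1 * C := mul_le_mul h1 (hC' _ hmem) (norm_nonneg _) zero_le_one
      _ = C := one_mul C
  · exact intervalIntegrable_const
  · filter_upwards with t _ x _
    exact aux_key_deriv Φ hΦ k t x

lemma aux_contDiff {m : ℕ} (n : ℕ) :
    ∀ {E : Type} [NormedAddCommGroup E] [NormedSpace ℝ E] [CompleteSpace E]
      (Φ : EuclideanSpace ℝ (Fin m) → E), ContDiff ℝ ((⊤ : ℕ∞) : WithTop ℕ∞) Φ → ∀ k : ℕ,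
      ContDiff ℝ n (fun x : EuclideanSpace ℝ (Fin m) => ∫ t in (0:ℝ)..1, t ^ k • Φ (t • x)) := by
  induction n with
  | zero =>
    intro E _ _ _ Φ hΦ k
    rw [show ((0:ℕ) : WithTop ℕ∞) = 0 from rfl, contDiff_zero]
    exact intervalIntegral.continuous_parametric_intervalIntegral_of_continuous'
      (f := fun (x : EuclideanSpace ℝ (Fin m)) (t : ℝ) => t ^ k • Φ (t • x)) (μ := volume)
      ((continuous_snd.pow k).smul (hΦ.continuous.comp (continuous_snd.smul continuous_fst)))
      0 1
  | succ n ih =>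
    intro E _ _ _ Φ hΦ k
    have hΦ' : ContDiff ℝ ((⊤ : ℕ∞) : WithTop ℕ∞) (fderiv ℝ Φ) := (contDiff_infty_iff_fderiv.mp hΦ).2
    rw [show ((n+1:ℕ) : WithTop ℕ∞) = (n : WithTop ℕ∞) + 1 by push_cast; ring,
      contDiff_succ_iff_fderiv]
    refine ⟨fun x => (aux_hasFDerivAt Φ hΦ k x).differentiableAt, by simp, ?_⟩
    have heq : (fderiv ℝ fun x : EuclideanSpace ℝ (Fin m) => ∫ t in (0:ℝ)..1, t ^ k • Φ (t • x))
        = fun x : EuclideanSpace ℝ (Fin m) =>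
            ∫ t in (0:ℝ)..1, t ^ (k+1) • fderiv ℝ Φ (t • x) := by
      funext x
      exact (aux_hasFDerivAt Φ hΦ k x).fderiv
    rw [heq]
    exact ih (fderiv ℝ Φ) hΦ' (k+1)

lemma hadamard_euclidean {m : ℕ} (F : EuclideanSpace ℝ (Fin m) → ℝ)
    (hF : ContDiff ℝ ((⊤ : ℕ∞) : WithTop ℕ∞) F) (hF0 : F 0 = 0) :
    ∃ g : Fin m → (EuclideanSpace ℝ (Fin m) → ℝ),
      (∀ i, ContDiff ℝ ((⊤ : ℕ∞) : WithTop ℕ∞) (g i)) ∧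
      ∀ x, F x = ∑ i : Fin m, x i * g i x := by
  have hF' : ContDiff ℝ ((⊤ : ℕ∞) : WithTop ℕ∞) (fderiv ℝ F) := (contDiff_infty_iff_fderiv.mp hF).2
  set G : EuclideanSpace ℝ (Fin m) → (EuclideanSpace ℝ (Fin m) →L[ℝ] ℝ) :=
    fun x => ∫ t in (0:ℝ)..1, (t:ℝ) ^ 0 • fderiv ℝ F (t • x) with hGdef
  have hG : ContDiff ℝ ((⊤ : ℕ∞) : WithTop ℕ∞) G := by
    rw [contDiff_infty]
    exact fun n => aux_contDiff n (fderiv ℝ F) hF' 0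
  refine ⟨fun i x => G x (EuclideanSpace.single i 1), fun i => hG.clm_apply contDiff_const, ?_⟩
  intro x
  have hint : IntervalIntegrable (fun t : ℝ => (t:ℝ) ^ 0 • fderiv ℝ F (t • x)) MeasureTheory.volume 0 1 :=
    Continuous.intervalIntegrable
      ((continuous_pow 0).smul (hF'.continuous.comp (continuous_id.smul continuous_const))) _ _
  have happly : ∀ v, G x v = ∫ t in (0:ℝ)..1, fderiv ℝ F (t • x) v := by
    intro v
    rw [hGdef, ContinuousLinearMap.intervalIntegral_apply hint v]
    simp
  have hFTC : (∫ t in (0:ℝ)..1, fderiv ℝ F (t • x) x) = F x := by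
    have hderiv : ∀ t ∈ Set.uIcc (0:ℝ) 1, HasDerivAt (fun t : ℝ => F (t • x))
        (fderiv ℝ F (t • x) x) t := by
      intro t _
      have h1 : HasDerivAt (fun t : ℝ => t • x) x t := by
        simpa using (hasDerivAt_id t).smul_const x
      exact ((hF.differentiable (by simp) (t • x)).hasFDerivAt).comp_hasDerivAt t h1
    have hint2 : IntervalIntegrable (fun t : ℝ => fderiv ℝ F (t • x) x) MeasureTheory.volume 0 1 := by
      apply Continuous.intervalIntegrable
      exact (ContinuousLinearMap.apply ℝ ℝ x).continuous.comp
        (hF'.continuous.comp (continuous_id.smul continuous_const))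
    rw [intervalIntegral.integral_eq_sub_of_hasDerivAt hderiv hint2]
    simp [hF0]
  have hx : x = ∑ i : Fin m, x i • EuclideanSpace.single i (1:ℝ) := by
    ext j
    rw [WithLp.ofLp_sum, Finset.sum_apply]
    simp [EuclideanSpace.single_apply, Finset.sum_ite_eq', smul_eq_mul, PiLp.smul_apply]
  have hlin : ∀ (L : EuclideanSpace ℝ (Fin m) →L[ℝ] ℝ),
      L x = ∑ i : Fin m, x i * L (EuclideanSpace.single i 1) := by
    intro L
    conv_lhs => rw [hx]
    rw [map_sum]
    simp [smul_eq_mul]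
  calc F x = G x x := by rw [happly x, hFTC]
    _ = ∑ i : Fin m, x i * G x (EuclideanSpace.single i 1) := hlin (G x)


/-- Hadamard's lemma at a point of a manifold, via a global chart: if `U₀ ⊆ M` is
an open neighborhood of `s₀` diffeomorphic to `ℝ^m` via `ω` with `ω(s₀) = 0`, then
every smooth function `f : U₀ → ℝ` with `f(s₀) = 0` can be written as
`f = ∑ᵢ ωⁱ · fᵢ` with the `fᵢ` smooth on `U₀`. -/
theorem hadamard_at_point_of_global_chart (m : ℕ) (M : Type*)
    [TopologicalSpace M]
    [ChartedSpace (EuclideanSpace ℝ (Fin m)) M]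
    [IsManifold (𝓘(ℝ, EuclideanSpace ℝ (Fin m))) (⊤ : ℕ∞) M]
    (s₀ : M) (U₀ : Opens M) (hs₀ : s₀ ∈ U₀)
    (ω : U₀ ≃ EuclideanSpace ℝ (Fin m))
    (hω : ContMDiff (𝓘(ℝ, EuclideanSpace ℝ (Fin m)))
      (𝓘(ℝ, EuclideanSpace ℝ (Fin m))) (⊤ : ℕ∞) ω)
    (hωsymm : ContMDiff (𝓘(ℝ, EuclideanSpace ℝ (Fin m)))
      (𝓘(ℝ, EuclideanSpace ℝ (Fin m))) (⊤ : ℕ∞) ω.symm)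
    (hω₀ : ω ⟨s₀, hs₀⟩ = 0)
    (f : U₀ → ℝ)
    (hf : ContMDiff (𝓘(ℝ, EuclideanSpace ℝ (Fin m))) 𝓘(ℝ, ℝ) (⊤ : ℕ∞) f)
    (hf₀ : f ⟨s₀, hs₀⟩ = 0) :
    ∃ g : Fin m → (U₀ → ℝ),
      (∀ i, ContMDiff (𝓘(ℝ, EuclideanSpace ℝ (Fin m))) 𝓘(ℝ, ℝ) (⊤ : ℕ∞) (g i)) ∧
      ∀ t : U₀, f t = ∑ i : Fin m, (ω t) i * g i t := by
  classical
  have hF : ContDiff ℝ ((⊤ : ℕ∞) : WithTop ℕ∞) (f ∘ ω.symm) := (hf.comp hωsymm).contDiff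
  have hF0 : (f ∘ ω.symm) 0 = 0 := by
    rw [← hω₀]
    simp [Function.comp, hf₀]
  obtain ⟨g', hg', hrep⟩ := hadamard_euclidean (f ∘ ω.symm) hF hF0
  refine ⟨fun i t => g' i (ω t), fun i => ?_, fun t => ?_⟩
  · exact ((hg' i).contMDiff).comp hω
  · have h := hrep (ω t)
    simpa [Function.comp] using h
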